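/- Let c, v, w be positive real numbers, let s, λ be real numbers, and let V : ℝ → ℝ be four times continuously differentiable with V(−1) = V(1) = 0, V′(−1) = 2c/w and V′(1) = −2c/v. Then ∫_{−1}^{1} z·F(z) dz = 2·(1/v² − 1/w²) + (2s/c)·(1/v − 1/w). -/

import Mathlib

/-- The Calabi-ansatz quantity `F(z) = (1/c²)·(V‴·V)′(z) − (s/c²)·V″(z) − λ²/c⁴`,
which equals `4𝒮(ω)` for the Calabi ansatz with momentum profile `V` on the product
orbifold surface `ℙ¹_{v,w} × Σ` over a curve of constant scalar curvature `s`. -/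
noncomputable def calabiF (c s lam : ℝ) (V : ℝ → ℝ) (z : ℝ) : ℝ :=
  (1 / c ^ 2) * deriv (fun t => deriv^[3] V t * V t) z
    - (s / c ^ 2) * deriv^[2] V z - lam ^ 2 / c ^ 4

theorem stmt_10 (c v w : ℝ) (hc : 0 < c) (hv : 0 < v) (hw : 0 < w)
    (s lam : ℝ) (V : ℝ → ℝ) (hV : ContDiff ℝ 4 V)
    (hVm : V (-1) = 0) (hVp : V 1 = 0)
    (hV'm : deriv V (-1) = 2 * c / w) (hV'p : deriv V 1 = -(2 * c) / v) :
    (∫ z in (-1 : ℝ)..1, z * calabiF c s lam V z)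
      = 2 * (1 / v ^ 2 - 1 / w ^ 2) + (2 * s / c) * (1 / v - 1 / w) := by
  have e3 : deriv^[3] V = deriv (deriv^[2] V) := by
    simp [Function.iterate_succ', Function.comp]
  have e2 : deriv^[2] V = deriv (deriv V) := by
    simp [Function.iterate_succ', Function.comp]
  have h3 : ContDiff ℝ 1 (deriv^[3] V) := hV.iterate_deriv' 1 3
  have h2 : ContDiff ℝ 2 (deriv^[2] V) := hV.iterate_deriv' 2 2
  have h1 : ContDiff ℝ 3 (deriv V) := hV.iterate_deriv' 3 1
  have hV1 : ∀ z : ℝ, HasDerivAt V (deriv V z) z := fun z =>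
    ((hV.differentiable (by norm_num)) z).hasDerivAt
  have hV2 : ∀ z : ℝ, HasDerivAt (deriv V) (deriv^[2] V z) z := fun z => by
    rw [e2]; exact ((h1.differentiable (by norm_num)) z).hasDerivAt
  have hV3 : ∀ z : ℝ, HasDerivAt (deriv^[2] V) (deriv^[3] V z) z := fun z => by
    rw [e3]; exact ((h2.differentiable (by norm_num)) z).hasDerivAt
  have hV4 : ∀ z : ℝ, HasDerivAt (deriv^[3] V) (deriv (deriv^[3] V) z) z := fun z =>
    ((h3.differentiable (by norm_num)) z).hasDerivAt
  have hprod : ∀ z : ℝ, HasDerivAt (fun t => deriv^[3] V t * V t)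
      (deriv (deriv^[3] V) z * V z + deriv^[3] V z * deriv V z) z := fun z =>
    (hV4 z).mul (hV1 z)
  -- antiderivative
  set H : ℝ → ℝ := fun t =>
    (1 / c ^ 2) * (t * (deriv^[3] V t * V t) - deriv^[2] V t * V t
        + deriv V t * deriv V t / 2)
      - (s / c ^ 2) * (t * deriv V t - V t) - lam ^ 2 * t ^ 2 / (2 * c ^ 4) with hH
  have hder : ∀ z : ℝ, HasDerivAt H (z * calabiF c s lam V z) z := by
    intro z
    have A : HasDerivAt (fun t : ℝ => t * (deriv^[3] V t * V t))
        (1 * (deriv^[3] V z * V z) + z * (deriv (deriv^[3] V) z * V z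
          + deriv^[3] V z * deriv V z)) z := (hasDerivAt_id z).mul (hprod z)
    have B : HasDerivAt (fun t : ℝ => deriv^[2] V t * V t)
        (deriv^[3] V z * V z + deriv^[2] V z * deriv V z) z := (hV3 z).mul (hV1 z)
    have C : HasDerivAt (fun t : ℝ => deriv V t * deriv V t / 2)
        ((deriv^[2] V z * deriv V z + deriv V z * deriv^[2] V z) / 2) z :=
      ((hV2 z).mul (hV2 z)).div_const 2
    have D : HasDerivAt (fun t : ℝ => t * deriv V t - V t)
        ((1 * deriv V z + z * deriv^[2] V z) - deriv V z) z :=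
      ((hasDerivAt_id z).mul (hV2 z)).sub (hV1 z)
    have E : HasDerivAt (fun t : ℝ => lam ^ 2 * t ^ 2 / (2 * c ^ 4))
        (lam ^ 2 * (2 * z ^ 1) / (2 * c ^ 4)) z :=
      ((hasDerivAt_pow 2 z).const_mul (lam ^ 2)).div_const (2 * c ^ 4)
    have h := ((((A.sub B).add C).const_mul (1 / c ^ 2)).sub
      (D.const_mul (s / c ^ 2))).sub E
    refine h.congr_deriv ?_
    rw [calabiF, (hprod z).deriv]
    field_simp
    ring
  have hcont : Continuous (fun z => z * calabiF c s lam V z) := by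
    have hc1 : Continuous (deriv (fun t => deriv^[3] V t * V t)) := by
      have : ContDiff ℝ 1 (fun t => deriv^[3] V t * V t) :=
        h3.mul (hV.of_le (by norm_num))
      exact this.continuous_deriv le_rfl
    have hc2 : Continuous (deriv^[2] V) := h2.continuous
    unfold calabiF
    fun_prop
  have key := intervalIntegral.integral_eq_sub_of_hasDerivAt
    (fun z _ => hder z) (hcont.intervalIntegrable (-1) 1)
  rw [key, hH]
  simp only [hVm, hVp, hV'm, hV'p]
  field_simp
  ring
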